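/- Let G=(V,E) be a finite tree with at least three vertices, with boundary δG containing x; let x₁ be the neighbor of x, let x₂,…,x_m (m=deg x₁) be the other neighbors of x₁, and set σ₁:=min_{2≤j≤m} σ(G_j,x₁), where G_j=H_j(x_j,x₁) and H_j is the branch from (x_j,x₁). If f is a λ-flow to x on G with 0≤λ<σ₁ such that f(z)>0 for all z∈δG∖{x} and f(x)<0, then λ > σ(G,x). -/

import Mathlib

open Finset

attribute [local instance] Classical.propDecidable

set_option linter.unusedSectionVars false
set_option linter.unusedVariables false
set_option maxHeartbeats 1000000

namespace Steklov

variable {V : Type} [Fintype V] [DecidableEq V]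

/-- The boundary of a graph: the set of vertices of degree one. -/
noncomputable def bdry (G : SimpleGraph V) : Finset V :=
  Finset.univ.filter (fun v => G.degree v = 1)

/-- The graph Laplacian `Δf(x) = Σ_{y∼x} (f x - f y)`. -/
noncomputable def lap (G : SimpleGraph V) (f : V → ℝ) (x : V) : ℝ :=
  ∑ y ∈ G.neighborFinset x, (f x - f y)

/-- `f` is a Steklov eigenfunction of `G` with eigenvalue `lam`:
`f ≠ 0`, `Δf = 0` on the interior and `∂f/∂n = lam • f` on the boundary. -/
noncomputable def IsEigenpair (G : SimpleGraph V) (lam : ℝ) (f : V → ℝ) : Prop :=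
  f ≠ 0 ∧ (∀ x, x ∉ bdry G → lap G f x = 0) ∧ ∀ x ∈ bdry G, lap G f x = lam * f x

/-- The first nonzero Steklov eigenvalue of `G`. -/
noncomputable def lambda2 (G : SimpleGraph V) : ℝ :=
  sInf {lam : ℝ | 0 < lam ∧ ∃ f : V → ℝ, IsEigenpair G lam f}

/-- `f` is a `lam`-flow to `x` on `G`. -/
noncomputable def IsFlow (G : SimpleGraph V) (lam : ℝ) (x : V) (f : V → ℝ) : Prop :=
  f ≠ 0 ∧ (∀ w, w ∉ bdry G → w ≠ x → lap G f w = 0) ∧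
    ∀ w ∈ bdry G, w ≠ x → lap G f w = lam * f w

/-- The Rayleigh quotient of `f` (sum over undirected edges in the numerator). -/
noncomputable def rayleigh (G : SimpleGraph V) (f : V → ℝ) : ℝ :=
  ((∑ x, ∑ y ∈ G.neighborFinset x, (f x - f y) ^ 2) / 2) / ∑ x ∈ bdry G, f x ^ 2

/-- `Σ(G,x)`: the set of `lam ≥ 0` admitting a `lam`-flow `f` to `x` with `f x = 0`
which increases along edges pointing away from `x`. -/
def SigmaSet (G : SimpleGraph V) (x : V) : Set ℝ :=
  {lam | 0 ≤ lam ∧ ∃ f : V → ℝ, IsFlow G lam x f ∧ f x = 0 ∧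
    ∀ y z : V, G.Adj y z → G.dist x z < G.dist x y → f z < f y}

/-- `Σ̂(G,x)`: the set of `lam ≥ 0` admitting a `lam`-flow `f` to `x` with `f x = 0`. -/
def SigmaHatSet (G : SimpleGraph V) (x : V) : Set ℝ :=
  {lam | 0 ≤ lam ∧ ∃ f : V → ℝ, IsFlow G lam x f ∧ f x = 0}

/-- `σ(G,x) = inf Σ(G,x)`. -/
noncomputable def sigma (G : SimpleGraph V) (x : V) : ℝ := sInf (SigmaSet G x)

/-- `σ̂(G,x) = inf Σ̂(G,x)`. -/
noncomputable def sigmaHat (G : SimpleGraph V) (x : V) : ℝ := sInf (SigmaHatSet G x)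

/-- The vertex set of the branch from `(u,v)`: the connected component of `u`
after deleting the edge between `u` and `v`. -/
def branchSet (G : SimpleGraph V) (u v : V) : Set V :=
  {w | (G.deleteEdges {s(u, v)}).Reachable u w}

/-- The vertex set of the subtree `H(u,v)` spanned by the branch from `(u,v)` together
with `v`. -/
def branchClosed (G : SimpleGraph V) (u v : V) : Set V :=
  insert v (branchSet G u v)

/-- `σ(H(u,v), v)`, computed intrinsically in the subtree `H(u,v)`. -/
noncomputable def sigmaB (G : SimpleGraph V) (u v : V) : ℝ :=
  sigma (G.induce (branchClosed G u v)) ⟨v, Set.mem_insert _ _⟩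

/-- The double `(G)²_x` of `G` at `x`: two disjoint copies of `G` with the two
copies of `x` identified. -/
def doubleAt (G : SimpleGraph V) (x : V) : SimpleGraph (V ⊕ {v : V // v ≠ x}) where
  Adj a b :=
    match a, b with
    | Sum.inl u, Sum.inl w => G.Adj u w
    | Sum.inr u, Sum.inr w => G.Adj u.1 w.1
    | Sum.inl u, Sum.inr w => u = x ∧ G.Adj x w.1
    | Sum.inr u, Sum.inl w => w = x ∧ G.Adj x u.1
  symm := by
    constructor
    rintro (u | u) (w | w) h
    · exact h.symm
    · exact h
    · exact h
    · exact h.symm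
  loopless := by
    constructor
    rintro (u | u) h
    · exact G.loopless.irrefl u h
    · exact G.loopless.irrefl u.1 h

section AuxSteklov
open SimpleGraph
variable {G : SimpleGraph V}

/-- directed energy -/
noncomputable def en (G : SimpleGraph V) (h : V → ℝ) : ℝ :=
  ∑ v, ∑ y ∈ G.neighborFinset v, (h v - h y) ^ 2

/-- boundary quadratic form omitting `x` -/
noncomputable def bd (G : SimpleGraph V) (x : V) (h : V → ℝ) : ℝ :=
  ∑ w ∈ (bdry G).erase x, h w ^ 2

lemma lap_sub (G : SimpleGraph V) (g f : V → ℝ) (w : V) :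
    lap G (fun v => g v - f v) w = lap G g w - lap G f w := by
  unfold lap
  rw [← Finset.sum_sub_distrib]
  apply Finset.sum_congr rfl; intros; ring

lemma nbr_swap (G : SimpleGraph V) (F : V → V → ℝ) :
    ∑ v, ∑ y ∈ G.neighborFinset v, F v y = ∑ v, ∑ y ∈ G.neighborFinset v, F y v :=
  Finset.sum_comm' (fun a b => by
    simp only [Finset.mem_univ, true_and, and_true, SimpleGraph.mem_neighborFinset]
    exact G.adj_comm a b)

lemma ebil_eq (G : SimpleGraph V) (g f : V → ℝ) :
    ∑ v, ∑ y ∈ G.neighborFinset v, (g v - g y) * (f v - f y)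
      = 2 * ∑ v, g v * lap G f v := by
  have h1 : ∀ v y : V, (g v - g y) * (f v - f y)
      = g v * (f v - f y) - g y * (f v - f y) := by intros; ring
  simp only [h1, Finset.sum_sub_distrib]
  have h2 : ∑ v, ∑ y ∈ G.neighborFinset v, g y * (f v - f y)
      = ∑ v, ∑ y ∈ G.neighborFinset v, g v * (f y - f v) :=
    nbr_swap G (fun v y => g y * (f v - f y))
  have h3 : ∀ v, ∑ y ∈ G.neighborFinset v, g v * (f v - f y) = g v * lap G f v := by
    intro v; rw [lap, Finset.mul_sum]
  rw [h2]
  have h4 : ∀ v, ∑ y ∈ G.neighborFinset v, g v * (f y - f v)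
      = -(g v * lap G f v) := by
    intro v; rw [lap, Finset.mul_sum, ← Finset.sum_neg_distrib]
    congr 1; ext y; ring
  simp only [h3, h4, Finset.sum_neg_distrib]
  ring

lemma sum_lap_subset (G : SimpleGraph V) (f : V → ℝ) (S : Finset V) :
    ∑ v ∈ S, lap G f v = ∑ v ∈ S, ∑ y ∈ G.neighborFinset v \ S, (f v - f y) := by
  have key : ∑ v ∈ S, ∑ y ∈ S.filter (fun y => G.Adj v y), (f v - f y) = 0 := by
    have e1 : ∀ v ∈ S, ∑ y ∈ S.filter (fun y => G.Adj v y), (f v - f y)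
        = ∑ y ∈ S, (if G.Adj v y then f v - f y else 0) := by
      intro v _; rw [Finset.sum_filter]
    rw [Finset.sum_congr rfl e1]
    have h2 : ∑ v ∈ S, ∑ y ∈ S, (if G.Adj v y then f v - f y else 0)
        = ∑ y ∈ S, ∑ v ∈ S, (if G.Adj v y then f v - f y else 0) := Finset.sum_comm
    have h3 : ∑ y ∈ S, ∑ v ∈ S, (if G.Adj v y then f v - f y else 0)
        = ∑ v ∈ S, ∑ y ∈ S, -(if G.Adj v y then f v - f y else 0) := by
      apply Finset.sum_congr rfl; intro a _
      apply Finset.sum_congr rfl; intro b _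
      by_cases h : G.Adj b a
      · rw [if_pos h, if_pos h.symm]; ring
      · rw [if_neg h, if_neg (fun h' => h h'.symm), neg_zero]
    have h4 := h2.trans h3
    simp only [Finset.sum_neg_distrib] at h4
    linarith
  have split : ∀ v ∈ S, lap G f v
      = (∑ y ∈ G.neighborFinset v \ S, (f v - f y))
        + ∑ y ∈ S.filter (fun y => G.Adj v y), (f v - f y) := by
    intro v _
    have : S.filter (fun y => G.Adj v y) = (G.neighborFinset v).filter (fun y => y ∈ S) := by
      ext y; simp [SimpleGraph.mem_neighborFinset, and_comm]
    rw [this, lap, ← Finset.sum_filter_add_sum_filter_not (G.neighborFinset v) (fun y => y ∈ S)]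
    have : G.neighborFinset v \ S = (G.neighborFinset v).filter (fun y => ¬ y ∈ S) := by
      ext y; simp [Finset.mem_sdiff]
    rw [this]; ring
  rw [Finset.sum_congr rfl split, Finset.sum_add_distrib, key, add_zero]




open SimpleGraph

variable {G : SimpleGraph V}

lemma en_nonneg (G : SimpleGraph V) (h : V → ℝ) : 0 ≤ Steklov.en G h :=
  Finset.sum_nonneg fun _ _ => Finset.sum_nonneg fun _ _ => sq_nonneg _

lemma single_edge_le_en (h : V → ℝ) {a c : V} (hac : G.Adj a c) :
    (h a - h c) ^ 2 ≤ Steklov.en G h := by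
  unfold Steklov.en
  have h1 : (h a - h c) ^ 2 ≤ ∑ y ∈ G.neighborFinset a, (h a - h y) ^ 2 :=
    Finset.single_le_sum (f := fun y => (h a - h y) ^ 2) (fun y _ => sq_nonneg _)
      (by simpa [mem_neighborFinset] using hac)
  exact h1.trans (Finset.single_le_sum (f := fun v => ∑ y ∈ G.neighborFinset v, (h v - h y) ^ 2)
    (fun v _ => Finset.sum_nonneg fun y _ => sq_nonneg _) (Finset.mem_univ a))

lemma walk_bound (h : V → ℝ) {a b : V} (p : G.Walk a b) :
    (h a - h b) ^ 2 ≤ ((2:ℝ) ^ (p.length + 1) - 2) * Steklov.en G h := by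
  induction p with
  | nil => simp
  | cons hadj q ih =>
    rename_i u v w
    have h1 : (h u - h v) ^ 2 ≤ Steklov.en G h := single_edge_le_en h hadj
    have hen : (0:ℝ) ≤ Steklov.en G h := en_nonneg G h
    have hlen : (SimpleGraph.Walk.cons hadj q).length = q.length + 1 :=
      SimpleGraph.Walk.length_cons _ _
    rw [hlen]
    have h2 : (h u - h w) ^ 2 ≤ 2 * (h u - h v) ^ 2 + 2 * (h v - h w) ^ 2 := by
      nlinarith [sq_nonneg ((h u - h v) - (h v - h w))]
    have h3 : ((2:ℝ) ^ (q.length + 1 + 1) - 2) = 2 + 2 * ((2:ℝ) ^ (q.length + 1) - 2) := by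
      rw [pow_succ]; ring
    rw [h3]
    nlinarith

lemma propagate {x : V} (P : V → Prop)
    (hP : ∀ v, v ≠ x → P v → ∀ y, G.Adj v y → P y)
    {a b : V} (p : G.Walk a b) (hxs : ∀ v ∈ p.support, v ≠ x) (ha : P a) : P b := by
  induction p with
  | nil => exact ha
  | cons hadj q ih =>
    rename_i u v w
    exact ih (fun t ht => hxs t (by simp [ht])) (hP u (hxs u (by simp)) ha v hadj)

lemma eq_on_walk (h : V → ℝ) (hc : ∀ v y, G.Adj v y → h v = h y)
    {a b : V} (p : G.Walk a b) : h a = h b := by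
  induction p with
  | nil => rfl
  | cons hadj q ih => rename_i u v w; rw [hc u v hadj, ih]

lemma nbrs_eq_singleton {x x₁ : V} (hdeg : G.degree x = 1) (hadj : G.Adj x x₁) :
    G.neighborFinset x = {x₁} := by
  rw [← SimpleGraph.card_neighborFinset_eq_degree] at hdeg
  obtain ⟨c, hc⟩ := Finset.card_eq_one.mp hdeg
  have : x₁ ∈ G.neighborFinset x := by simpa [mem_neighborFinset] using hadj
  rw [hc] at this ⊢
  simp_all

lemma exists_walk_avoid (hconn : G.Connected) {x : V} (hdeg : G.degree x = 1)
    {a b : V} (ha : a ≠ x) (hb : b ≠ x) :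
    ∃ p : G.Walk a b, ∀ v ∈ p.support, v ≠ x := by
  obtain ⟨w⟩ := hconn a b
  refine ⟨w.bypass, ?_⟩
  have hp : w.bypass.IsPath := SimpleGraph.Walk.bypass_isPath w
  intro v hv
  rintro rfl
  -- v = x in the path's support
  set p := w.bypass with hpdef
  have h1 := p.take_spec hv
  set q₁ := p.takeUntil v hv with hq1
  set q₂ := p.dropUntil v hv with hq2
  -- q₁ : a → x nonnil, q₂ : x → b nonnil
  obtain ⟨c, hc⟩ : ∃ c, G.neighborFinset v = {c} :=
    Finset.card_eq_one.mp (by rwa [SimpleGraph.card_neighborFinset_eq_degree])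
  -- second vertex of q₂
  have hcq2 : c ∈ q₂.support.tail := by
    cases hq2e : q₂ with
    | nil => exact absurd rfl hb
    | cons hadj t =>
      rename_i u
      have huc : u = c := by
        have : u ∈ G.neighborFinset v := by simpa [mem_neighborFinset] using hadj
        rwa [hc, Finset.mem_singleton] at this
      rw [← huc]
      simp [SimpleGraph.Walk.support_cons, SimpleGraph.Walk.start_mem_support]
  have hcq1 : c ∈ q₁.support := by
    cases hq1e : q₁.reverse with
    | nil =>
      exfalso
      have hlen : q₁.length = 0 := by
        have := congrArg SimpleGraph.Walk.length hq1e
        simpa [SimpleGraph.Walk.length_reverse] using this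
      exact ha (SimpleGraph.Walk.eq_of_length_eq_zero hlen)
    | cons hadj t =>
      rename_i u
      have huc : u = c := by
        have : u ∈ G.neighborFinset v := by simpa [mem_neighborFinset] using hadj
        rwa [hc, Finset.mem_singleton] at this
      rw [← huc]
      have : u ∈ q₁.reverse.support := by
        rw [hq1e]
        simp [SimpleGraph.Walk.support_cons]
      rwa [SimpleGraph.Walk.support_reverse, List.mem_reverse] at this
  have hnodup := hp.support_nodup
  rw [← h1, SimpleGraph.Walk.support_append] at hnodup
  exact (List.disjoint_of_nodup_append hnodup) hcq1 hcq2


open SimpleGraph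

variable {G : SimpleGraph V}

lemma isPath_concat {a b c : V} {p : G.Walk a b} (hp : p.IsPath) (h : G.Adj b c)
    (hc : c ∉ p.support) : (p.concat h).IsPath := by
  rw [← SimpleGraph.Walk.isPath_reverse_iff, SimpleGraph.Walk.reverse_concat]
  rw [SimpleGraph.Walk.cons_isPath_iff]
  refine ⟨hp.reverse, ?_⟩
  rwa [SimpleGraph.Walk.support_reverse, List.mem_reverse]

/-- a shortest path -/
lemma exists_shortest_path (hconn : G.Connected) (a b : V) :
    ∃ p : G.Walk a b, p.IsPath ∧ p.length = G.dist a b := by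
  obtain ⟨w, hw⟩ := (hconn a b).exists_walk_length_eq_dist
  exact ⟨w, w.isPath_of_length_eq_dist hw, hw⟩

/-- if `v` lies on a path from `a` to `u` with `v ≠ u`, the path is long -/
lemma length_lt_of_mem_support (hconn : G.Connected) {a u v : V} {q : G.Walk a u}
    (hv : v ∈ q.support) (hvu : v ≠ u) : G.dist a v + 1 ≤ q.length := by
  have h1 := q.take_spec hv
  have hlen := congrArg SimpleGraph.Walk.length h1
  rw [SimpleGraph.Walk.length_append] at hlen
  have h2 : G.dist a v ≤ (q.takeUntil v hv).length := SimpleGraph.dist_le _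
  have h3 : 1 ≤ (q.dropUntil v hv).length := by
    by_contra hcon
    push_neg at hcon
    interval_cases h : (q.dropUntil v hv).length
    · exact hvu (SimpleGraph.Walk.eq_of_length_eq_zero h)
  omega

/-- adjacent vertices in a tree have distance to a base differing by one -/
lemma tree_dist_step (hG : G.IsTree) (b : V) {v u : V} (h : G.Adj v u) :
    G.dist b u = G.dist b v + 1 ∨ G.dist b v = G.dist b u + 1 := by
  have hconn := hG.isConnected
  have h1 : G.dist b u ≤ G.dist b v + 1 := by
    have := hconn.dist_triangle (u := b) (v := v) (w := u)
    rwa [SimpleGraph.dist_eq_one_iff_adj.mpr h] at this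
  have h2 : G.dist b v ≤ G.dist b u + 1 := by
    have := hconn.dist_triangle (u := b) (v := u) (w := v)
    rwa [SimpleGraph.dist_eq_one_iff_adj.mpr h.symm] at this
  have hne : G.dist b u ≠ G.dist b v := by
    intro heq
    obtain ⟨p, hp, hpl⟩ := exists_shortest_path hconn b v
    obtain ⟨q, hq, hql⟩ := exists_shortest_path hconn b u
    have hvq : v ∉ q.support := by
      intro hv
      have := length_lt_of_mem_support hconn hv h.ne
      omega
    have hpath : (q.concat h.symm).IsPath := isPath_concat hq h.symm hvq
    obtain ⟨P, hP1, hP2⟩ := hG.existsUnique_path b v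
    have e1 : p = q.concat h.symm := (hP2 p hp).trans (hP2 _ hpath).symm
    have := congrArg SimpleGraph.Walk.length e1
    rw [SimpleGraph.Walk.length_concat] at this
    omega
  omega

/-- unique parent in a tree -/
lemma tree_unique_parent (hG : G.IsTree) (b : V) {v u₁ u₂ : V} (h₁ : G.Adj v u₁)
    (h₂ : G.Adj v u₂) (hd₁ : G.dist b u₁ + 1 = G.dist b v)
    (hd₂ : G.dist b u₂ + 1 = G.dist b v) : u₁ = u₂ := by
  have hconn := hG.isConnected
  obtain ⟨p₁, hp₁, hl₁⟩ := exists_shortest_path hconn b u₁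
  obtain ⟨p₂, hp₂, hl₂⟩ := exists_shortest_path hconn b u₂
  have hv₁ : v ∉ p₁.support := by
    intro hv
    have := length_lt_of_mem_support hconn hv h₁.ne
    omega
  have hv₂ : v ∉ p₂.support := by
    intro hv
    have := length_lt_of_mem_support hconn hv h₂.ne
    omega
  have hq₁ : (p₁.concat h₁.symm).IsPath := isPath_concat hp₁ h₁.symm hv₁
  have hq₂ : (p₂.concat h₂.symm).IsPath := isPath_concat hp₂ h₂.symm hv₂
  obtain ⟨P, hP1, hP2⟩ := hG.existsUnique_path b v
  have e : p₁.concat h₁.symm = p₂.concat h₂.symm := (hP2 _ hq₁).trans (hP2 _ hq₂).symm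
  have he : s(u₁, v) ∈ (p₂.concat h₂.symm).edges := by
    rw [← e, SimpleGraph.Walk.edges_concat]
    simp
  simp only [SimpleGraph.Walk.edges_concat, List.concat_eq_append, List.mem_append] at he
  rcases he with he | he
  · exact absurd (p₂.snd_mem_support_of_mem_edges he) hv₂
  · have he' : s(u₁, v) = s(u₂, v) := by simpa using he
    rcases Sym2.eq_iff.mp he' with ⟨h1, -⟩ | ⟨h1, -⟩
    · exact h1
    · exact absurd h1 h₁.ne'
  
/-- parent existence -/
lemma exists_parent (hconn : G.Connected) {b v : V} (hvb : v ≠ b) :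
    ∃ u, G.Adj v u ∧ G.dist b u + 1 = G.dist b v := by
  obtain ⟨p, hp, hl⟩ := exists_shortest_path hconn b v
  cases hpe : p.reverse with
  | nil =>
    exfalso
    have : p.length = 0 := by
      have := congrArg SimpleGraph.Walk.length hpe
      simpa [SimpleGraph.Walk.length_reverse] using this
    exact hvb.symm (SimpleGraph.Walk.eq_of_length_eq_zero this)
  | cons hadj t =>
    rename_i u
    refine ⟨u, hadj, ?_⟩
    have hlen : t.length + 1 = p.length := by
      have := congrArg SimpleGraph.Walk.length hpe
      rw [SimpleGraph.Walk.length_reverse] at this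
      simpa using this.symm
    have h1 : G.dist b u ≤ t.length := by
      have := SimpleGraph.dist_le t.reverse
      rwa [SimpleGraph.Walk.length_reverse] at this
    have h2 : G.dist b v ≤ G.dist b u + 1 := by
      have h3 := hconn.dist_triangle (u := b) (v := u) (w := v)
      rwa [SimpleGraph.dist_eq_one_iff_adj.mpr hadj.symm] at h3
    omega

/-- in a tree, a set not containing the base, closed under moving away from the base,
contains a leaf -/
lemma exists_leaf_in (hG : G.IsTree) (b : V) (S : Finset V) (hne : S.Nonempty)
    (hb : b ∉ S)
    (hcl : ∀ v ∈ S, ∀ u, G.Adj v u → G.dist b v < G.dist b u → u ∈ S) :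
    ∃ v ∈ S, G.degree v = 1 := by
  obtain ⟨v, hvS, hvmax⟩ := Finset.exists_max_image S (fun w => G.dist b w) hne
  have hvb : v ≠ b := fun h => hb (h ▸ hvS)
  obtain ⟨u₀, hu₀, hd₀⟩ := exists_parent hG.isConnected hvb
  refine ⟨v, hvS, ?_⟩
  have hsub : G.neighborFinset v = {u₀} := by
    apply Finset.eq_singleton_iff_unique_mem.mpr
    refine ⟨by simpa [SimpleGraph.mem_neighborFinset] using hu₀, ?_⟩
    intro u hu
    rw [SimpleGraph.mem_neighborFinset] at hu
    rcases tree_dist_step hG b hu with h | h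
    · exfalso
      have : u ∈ S := hcl v hvS u hu (by omega)
      have := hvmax u this
      omega
    · exact tree_unique_parent hG b hu hu₀ (by omega) (by omega)
  rw [← SimpleGraph.card_neighborFinset_eq_degree, hsub, Finset.card_singleton]


open SimpleGraph

variable {G : SimpleGraph V}

noncomputable def branchF (G : SimpleGraph V) (y z : V) : Finset V :=
  Finset.univ.filter (fun v => (G.deleteEdges {s(y, z)}).Reachable y v)

lemma mem_branchF {y z v : V} :
    v ∈ branchF G y z ↔ (G.deleteEdges {s(y, z)}).Reachable y v := by
  simp [branchF]

lemma branchF_self {y z : V} : y ∈ branchF G y z :=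
  mem_branchF.mpr (SimpleGraph.Reachable.refl y)

lemma branchF_not_z (hG : G.IsTree) {y z : V} (hadj : G.Adj y z) : z ∉ branchF G y z := by
  have hbr : G.IsBridge s(y, z) := (SimpleGraph.isAcyclic_iff_forall_adj_isBridge.mp hG.2) hadj
  have hnr := (SimpleGraph.isBridge_iff.mp hbr)
  rw [mem_branchF]
  exact hnr

lemma branchF_closed (hG : G.IsTree) {y z : V} (hadj : G.Adj y z) {v u : V}
    (hv : v ∈ branchF G y z) (hu : G.Adj v u) (hne : ¬(v = y ∧ u = z)) :
    u ∈ branchF G y z := by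
  rw [mem_branchF] at hv ⊢
  have hvz : v ≠ z := by
    rintro rfl
    exact branchF_not_z hG hadj (mem_branchF.mpr hv)
  have hedge : s(v, u) ∉ ({s(y, z)} : Set (Sym2 V)) := by
    simp only [Set.mem_singleton_iff]
    intro h
    rcases Sym2.eq_iff.mp h with ⟨rfl, rfl⟩ | ⟨rfl, rfl⟩
    · exact hne ⟨rfl, rfl⟩
    · exact hvz rfl
  exact hv.trans (SimpleGraph.Adj.reachable (by rw [SimpleGraph.deleteEdges_adj]; exact ⟨hu, hedge⟩))

lemma adj_dist_succ (hconn : G.Connected) {x y z : V} (hadj : G.Adj y z)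
    (hlt : G.dist x z < G.dist x y) : G.dist x y = G.dist x z + 1 := by
  have := hconn.dist_triangle (u := x) (v := z) (w := y)
  rw [SimpleGraph.dist_eq_one_iff_adj.mpr hadj.symm] at this
  omega

lemma branchF_not_x (hG : G.IsTree) {x y z : V} (hadj : G.Adj y z)
    (hlt : G.dist x z < G.dist x y) : x ∉ branchF G y z := by
  intro hx
  rw [mem_branchF] at hx
  obtain ⟨w⟩ := hx
  set G' := G.deleteEdges {s(y, z)} with hG'
  have hle : G' ≤ G := SimpleGraph.deleteEdges_le _
  set p' := w.bypass with hp'def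
  have hp' : p'.IsPath := w.bypass_isPath
  have hsub : ∀ e ∈ p'.edges, e ∈ G.edgeSet := fun e he =>
    SimpleGraph.edgeSet_mono hle (p'.edges_subset_edgeSet he)
  have hnoyz : s(y, z) ∉ p'.edges := by
    intro hmem
    have := p'.edges_subset_edgeSet hmem
    rw [SimpleGraph.mem_edgeSet] at this
    rw [SimpleGraph.deleteEdges_adj] at this
    exact this.2 (by simp)
  set P₁ : G.Walk y x := p'.transfer G hsub with hP₁def
  have hP₁ : P₁.IsPath := hp'.transfer hsub
  have hP₁e : P₁.edges = p'.edges := p'.edges_transfer hsub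
  have hdyz : G.dist x y = G.dist x z + 1 := adj_dist_succ hG.isConnected hadj hlt
  obtain ⟨p, hp, hpl⟩ := exists_shortest_path hG.isConnected x z
  have hyp : y ∉ p.support := by
    intro hy
    have := length_lt_of_mem_support hG.isConnected hy hadj.ne
    omega
  have hP₂ : (p.concat hadj.symm).IsPath := isPath_concat hp hadj.symm hyp
  obtain ⟨P, hPu1, hPu2⟩ := hG.existsUnique_path x y
  have e : P₁.reverse = p.concat hadj.symm :=
    (hPu2 _ hP₁.reverse).trans (hPu2 _ hP₂).symm
  have h1 : s(z, y) ∈ (p.concat hadj.symm).edges := by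
    rw [SimpleGraph.Walk.edges_concat]
    simp
  rw [← e, SimpleGraph.Walk.edges_reverse, List.mem_reverse, hP₁e] at h1
  rw [Sym2.eq_swap] at h1
  exact hnoyz h1


open SimpleGraph

variable {G : SimpleGraph V}

noncomputable def ebil (G : SimpleGraph V) (g h : V → ℝ) : ℝ :=
  ∑ v, ∑ y ∈ G.neighborFinset v, (g v - g y) * (h v - h y)

noncomputable def bbil (G : SimpleGraph V) (x : V) (g h : V → ℝ) : ℝ :=
  ∑ w ∈ (Steklov.bdry G).erase x, g w * h w

lemma bd_nonneg (G : SimpleGraph V) (x : V) (h : V → ℝ) : 0 ≤ Steklov.bd G x h :=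
  Finset.sum_nonneg fun _ _ => sq_nonneg _

lemma en_expand (G : SimpleGraph V) (g h : V → ℝ) (t : ℝ) :
    Steklov.en G (fun v => g v + t * h v)
      = Steklov.en G g + (2 * t) * ebil G g h + t ^ 2 * Steklov.en G h := by
  unfold Steklov.en ebil
  beta_reduce
  have e : ∀ v : V, ∑ y ∈ G.neighborFinset v, ((g v + t * h v) - (g y + t * h y)) ^ 2
      = (∑ y ∈ G.neighborFinset v, (g v - g y) ^ 2)
        + (2 * t) * (∑ y ∈ G.neighborFinset v, (g v - g y) * (h v - h y))
        + t ^ 2 * ∑ y ∈ G.neighborFinset v, (h v - h y) ^ 2 := by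
    intro v
    rw [Finset.mul_sum, Finset.mul_sum, ← Finset.sum_add_distrib, ← Finset.sum_add_distrib]
    apply Finset.sum_congr rfl; intro y _
    ring
  rw [Finset.sum_congr rfl (fun v _ => e v), Finset.sum_add_distrib, Finset.sum_add_distrib,
    ← Finset.mul_sum, ← Finset.mul_sum]

lemma bd_expand (G : SimpleGraph V) (x : V) (g h : V → ℝ) (t : ℝ) :
    Steklov.bd G x (fun v => g v + t * h v)
      = Steklov.bd G x g + (2 * t) * bbil G x g h + t ^ 2 * Steklov.bd G x h := by
  unfold Steklov.bd bbil
  beta_reduce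
  rw [Finset.mul_sum, Finset.mul_sum, ← Finset.sum_add_distrib, ← Finset.sum_add_distrib]
  apply Finset.sum_congr rfl; intro w _
  ring

lemma linear_coeff_zero {c d : ℝ} (key : ∀ t : ℝ, 0 ≤ 2 * t * c + t ^ 2 * d) : c = 0 := by
  by_contra hc
  have habs : 0 < |c| := abs_pos.mpr hc
  have h1 : ∀ t : ℝ, 0 < t → 2 * |c| ≤ t * d := by
    intro t ht
    have k1 := key t
    have k2 := key (-t)
    rcases abs_cases c with ⟨h, _⟩ | ⟨h, _⟩ <;> nlinarith
  have hd : 0 < d := by have := h1 1 one_pos; nlinarith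
  have := h1 (|c| / d) (by positivity)
  rw [div_mul_cancel₀ _ (ne_of_gt hd)] at this
  nlinarith

lemma euler_lagrange (x : V) (μ : ℝ)
    (hlb : ∀ h : V → ℝ, h x = 0 → 2 * μ * Steklov.bd G x h ≤ Steklov.en G h)
    (g : V → ℝ) (hgx : g x = 0) (heq : Steklov.en G g = 2 * μ * Steklov.bd G x g) :
    ∀ v, v ≠ x → Steklov.lap G g v = (if v ∈ Steklov.bdry G then μ * g v else 0) := by
  have hbil : ∀ h : V → ℝ, h x = 0 → ebil G g h = 2 * μ * bbil G x g h := by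
    intro h hhx
    have key : ∀ t : ℝ, 0 ≤ 2 * t * (ebil G g h - 2 * μ * bbil G x g h)
        + t ^ 2 * (Steklov.en G h - 2 * μ * Steklov.bd G x h) := by
      intro t
      have h0 := hlb (fun v => g v + t * h v) (by simp [hgx, hhx])
      rw [en_expand, bd_expand] at h0
      nlinarith [h0]
    have := linear_coeff_zero key
    linarith
  intro v hvx
  have hh := hbil (fun w => if w = v then 1 else 0) (by exact if_neg (fun h => hvx h.symm))
  have e1 : ebil G g (fun w => if w = v then (1:ℝ) else 0) = 2 * Steklov.lap G g v := by
    unfold ebil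
    have e2 : ∑ w, ∑ y ∈ G.neighborFinset w,
        (g w - g y) * ((if w = v then (1:ℝ) else 0) - (if y = v then 1 else 0))
        = ∑ w, (if w = v then (1:ℝ) else 0) * Steklov.lap G g w
          + ∑ w, ∑ y ∈ G.neighborFinset w, (g w - g y) * (-(if y = v then (1:ℝ) else 0)) := by
      rw [← Finset.sum_add_distrib]
      apply Finset.sum_congr rfl; intro w _
      rw [Steklov.lap, Finset.mul_sum, ← Finset.sum_add_distrib]
      apply Finset.sum_congr rfl; intro y _
      ring
    rw [e2]
    have e3 : ∑ w, (if w = v then (1:ℝ) else 0) * Steklov.lap G g w = Steklov.lap G g v := by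
      rw [Finset.sum_eq_single v]
      · simp
      · intro b _ hb; simp [hb]
      · intro hb; exact absurd (Finset.mem_univ v) hb
    have e4 : ∑ w, ∑ y ∈ G.neighborFinset w, (g w - g y) * (-(if y = v then (1:ℝ) else 0))
        = ∑ w, ∑ y ∈ G.neighborFinset w, (g y - g w) * (if y = v then (1:ℝ) else 0) := by
      apply Finset.sum_congr rfl; intro w _
      apply Finset.sum_congr rfl; intro y _
      ring
    have e5 : ∑ w, ∑ y ∈ G.neighborFinset w, (g y - g w) * (if y = v then (1:ℝ) else 0)
        = ∑ w, ∑ y ∈ G.neighborFinset w, (g w - g y) * (if w = v then (1:ℝ) else 0) :=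
      nbr_swap G (fun w y => (g y - g w) * (if y = v then (1:ℝ) else 0))
    have e6 : ∑ w, ∑ y ∈ G.neighborFinset w, (g w - g y) * (if w = v then (1:ℝ) else 0)
        = Steklov.lap G g v := by
      rw [Finset.sum_eq_single v]
      · rw [Steklov.lap]; apply Finset.sum_congr rfl; intro y _; simp
      · intro b _ hb
        apply Finset.sum_eq_zero; intro y _; simp [hb]
      · intro hb; exact absurd (Finset.mem_univ v) hb
    rw [e3, e4, e5, e6]; ring
  have e7 : bbil G x g (fun w => if w = v then (1:ℝ) else 0)
      = (if v ∈ (Steklov.bdry G).erase x then g v else 0) := by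
    unfold bbil
    have : ∀ w, g w * (if w = v then (1:ℝ) else 0) = if w = v then g w else 0 := by
      intro w; by_cases h : w = v <;> simp [h]
    simp only [this]
    exact Finset.sum_ite_eq' _ v g
  rw [e1, e7] at hh
  have e8 : (if v ∈ (Steklov.bdry G).erase x then g v else 0)
      = (if v ∈ Steklov.bdry G then g v else 0) := by
    by_cases h : v ∈ Steklov.bdry G <;> simp [Finset.mem_erase, hvx, h]
  rw [e8] at hh
  by_cases h : v ∈ Steklov.bdry G <;> simp [h] at hh ⊢ <;> linarith

lemma scale_lb (x : V) (m : V → ℝ)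
    (hmin : ∀ h : V → ℝ, h x = 0 → Steklov.bd G x h = 1 → Steklov.en G m ≤ Steklov.en G h) :
    ∀ h : V → ℝ, h x = 0 → Steklov.en G m * Steklov.bd G x h ≤ Steklov.en G h := by
  intro h hhx
  rcases eq_or_lt_of_le (bd_nonneg G x h) with hb | hb
  · rw [← hb, mul_zero]; exact en_nonneg G h
  · set c := Real.sqrt (Steklov.bd G x h) with hc
    have hc0 : 0 < c := Real.sqrt_pos.mpr hb
    have hcsq : c ^ 2 = Steklov.bd G x h := Real.sq_sqrt (le_of_lt hb)
    have hb1 : Steklov.bd G x (fun v => h v / c) = 1 := by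
      unfold Steklov.bd at hcsq ⊢
      rw [Finset.sum_congr rfl (fun w _ => div_pow (h w) c 2), ← Finset.sum_div, ← hcsq]
      exact div_self (by positivity)
    have he1 : Steklov.en G (fun v => h v / c) = Steklov.en G h / c ^ 2 := by
      unfold Steklov.en
      rw [Finset.sum_div]
      apply Finset.sum_congr rfl; intro v _
      rw [Finset.sum_div]
      apply Finset.sum_congr rfl; intro y _
      rw [div_sub_div_same, div_pow]
    have := hmin (fun v => h v / c) (by show h x / c = 0; rw [hhx]; exact zero_div c) hb1
    rw [he1] at this
    rw [← hcsq]
    calc Steklov.en G m * c ^ 2 ≤ (Steklov.en G h / c ^ 2) * c ^ 2 := by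
          apply mul_le_mul_of_nonneg_right this (by positivity)
      _ = Steklov.en G h := by field_simp

lemma flow_zero_propagation (hconn : G.Connected) {x : V} (hdeg : G.degree x = 1)
    (u : V → ℝ) (hnn : ∀ v, 0 ≤ u v)
    (hlap : ∀ v, v ≠ x → u v = 0 → Steklov.lap G u v = 0)
    {w₀ : V} (hw₀ : w₀ ≠ x) (hu0 : u w₀ = 0) : ∀ v, v ≠ x → u v = 0 := by
  intro b hb
  obtain ⟨p, hp⟩ := exists_walk_avoid hconn hdeg hw₀ hb
  refine propagate (fun v => u v = 0) ?_ p hp hu0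
  intro v hvx hv y hy
  have hl := hlap v hvx hv
  have : Steklov.lap G u v = -∑ y ∈ G.neighborFinset v, u y := by
    unfold Steklov.lap
    rw [← Finset.sum_neg_distrib]
    apply Finset.sum_congr rfl; intro w _
    rw [hv]; ring
  rw [this] at hl
  have hsum : ∑ y ∈ G.neighborFinset v, u y = 0 := by linarith
  have := (Finset.sum_eq_zero_iff_of_nonneg (fun w _ => hnn w)).mp hsum
  exact this y (by rwa [mem_neighborFinset])

lemma exists_minimizer (hconn : G.Connected) (x : V) (g₁ : V → ℝ) (hg₁x : g₁ x = 0)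
    (hg₁b : Steklov.bd G x g₁ = 1) :
    ∃ m : V → ℝ, m x = 0 ∧ Steklov.bd G x m = 1 ∧
      ∀ h : V → ℝ, h x = 0 → Steklov.bd G x h = 1 → Steklov.en G m ≤ Steklov.en G h := by
  have hcont_en : Continuous (fun h : V → ℝ => Steklov.en G h) := by
    unfold Steklov.en
    apply continuous_finset_sum
    intro v _
    apply continuous_finset_sum
    intro y _
    exact ((continuous_apply v).sub (continuous_apply y)).pow 2
  have hcont_bd : Continuous (fun h : V → ℝ => Steklov.bd G x h) := by
    unfold Steklov.bd
    apply continuous_finset_sum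
    intro w _
    exact (continuous_apply w).pow 2
  set T : Set (V → ℝ) :=
    {h | h x = 0 ∧ Steklov.bd G x h = 1 ∧ Steklov.en G h ≤ Steklov.en G g₁} with hT
  have hTne : g₁ ∈ T := ⟨hg₁x, hg₁b, le_refl _⟩
  have hTclosed : IsClosed T := by
    apply IsClosed.inter (isClosed_eq (continuous_apply x) continuous_const)
    exact IsClosed.inter (isClosed_eq hcont_bd continuous_const)
      (isClosed_le hcont_en continuous_const)
  set C : ℝ := (2:ℝ) ^ (Fintype.card V + 1) * Steklov.en G g₁ with hC
  have hCnn : 0 ≤ C := mul_nonneg (by positivity) (en_nonneg G g₁)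
  have hbound : ∀ h ∈ T, ∀ v, (h v) ^ 2 ≤ C := by
    rintro h ⟨hhx, -, hhe⟩ v
    obtain ⟨w⟩ := hconn.preconnected x v
    have hb := walk_bound h w.bypass
    have hlen : w.bypass.length + 1 ≤ Fintype.card V := w.bypass_isPath.length_lt
    have hmono : (2:ℝ) ^ (w.bypass.length + 1) ≤ (2:ℝ) ^ (Fintype.card V + 1) := by
      apply pow_le_pow_right₀ (by norm_num)
      omega
    have henh : Steklov.en G h ≤ Steklov.en G g₁ := hhe
    have h0 : (0:ℝ) ≤ Steklov.en G h := en_nonneg G h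
    have : (h x - h v) ^ 2 ≤ C := by
      calc (h x - h v) ^ 2 ≤ ((2:ℝ) ^ (w.bypass.length + 1) - 2) * Steklov.en G h := hb
        _ ≤ (2:ℝ) ^ (Fintype.card V + 1) * Steklov.en G h := by nlinarith
        _ ≤ C := by rw [hC]; exact mul_le_mul_of_nonneg_left henh (by positivity)
    rw [hhx] at this
    calc (h v) ^ 2 = (0 - h v) ^ 2 := by ring
      _ ≤ C := this
  have hTbdd : Bornology.IsBounded T := by
    apply (Metric.isBounded_closedBall (x := (0 : V → ℝ)) (r := Real.sqrt C)).subset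
    intro h hh
    rw [Metric.mem_closedBall, dist_zero_right]
    rw [pi_norm_le_iff_of_nonneg (Real.sqrt_nonneg C)]
    intro v
    rw [Real.norm_eq_abs, ← Real.sqrt_sq_eq_abs]
    exact Real.sqrt_le_sqrt (hbound h hh v)
  obtain ⟨m, hmT, hmin⟩ :=
    (Metric.isCompact_of_isClosed_isBounded hTclosed hTbdd).exists_isMinOn
      ⟨g₁, hTne⟩ hcont_en.continuousOn
  refine ⟨m, hmT.1, hmT.2.1, ?_⟩
  intro h hhx hhb
  by_cases hcase : Steklov.en G h ≤ Steklov.en G g₁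
  · exact hmin ⟨hhx, hhb, hcase⟩
  · exact le_trans hmT.2.2 (le_of_not_ge hcase)



open SimpleGraph

variable {G : SimpleGraph V}

theorem key_aux (hG : G.IsTree) {x : V} (hx : G.degree x = 1)
    (g₀ : V → ℝ) (hg₀x : g₀ x = 0) (hg₀b : 0 < Steklov.bd G x g₀) :
    ∃ μ : ℝ, 0 < μ ∧ μ ∈ Steklov.SigmaSet G x ∧
      (∀ h : V → ℝ, h x = 0 → 2 * μ * Steklov.bd G x h ≤ Steklov.en G h) := by
  have hconn := hG.isConnected
  -- normalize g₀
  set c := Real.sqrt (Steklov.bd G x g₀) with hcdef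
  have hc0 : 0 < c := Real.sqrt_pos.mpr hg₀b
  have hcsq : c ^ 2 = Steklov.bd G x g₀ := Real.sq_sqrt (le_of_lt hg₀b)
  set g₁ : V → ℝ := fun v => g₀ v / c with hg₁def
  have hg₁x : g₁ x = 0 := by show g₀ x / c = 0; rw [hg₀x]; exact zero_div c
  have hg₁b : Steklov.bd G x g₁ = 1 := by
    show ∑ w ∈ (Steklov.bdry G).erase x, (g₀ w / c) ^ 2 = 1
    unfold Steklov.bd at hcsq
    rw [Finset.sum_congr rfl (fun w _ => div_pow (g₀ w) c 2), ← Finset.sum_div, ← hcsq]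
    exact div_self (by positivity)
  obtain ⟨m₀, hm₀x, hm₀b, hm₀min⟩ := exists_minimizer hconn x g₁ hg₁x hg₁b
  -- take absolute values
  set m : V → ℝ := fun v => |m₀ v| with hmdef
  have hmx : m x = 0 := by show |m₀ x| = 0; rw [hm₀x, abs_zero]
  have hmb : Steklov.bd G x m = Steklov.bd G x m₀ := by
    unfold Steklov.bd
    exact Finset.sum_congr rfl fun w _ => by show |m₀ w| ^ 2 = _; rw [sq_abs]
  have hmen : Steklov.en G m ≤ Steklov.en G m₀ := by
    unfold Steklov.en
    apply Finset.sum_le_sum; intro v _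
    apply Finset.sum_le_sum; intro y _
    show (|m₀ v| - |m₀ y|) ^ 2 ≤ _
    calc (|m₀ v| - |m₀ y|) ^ 2 = |(|m₀ v| - |m₀ y|)| ^ 2 := (sq_abs _).symm
      _ ≤ |m₀ v - m₀ y| ^ 2 := by
          apply pow_le_pow_left₀ (abs_nonneg _) (abs_abs_sub_abs_le_abs_sub _ _)
      _ = (m₀ v - m₀ y) ^ 2 := sq_abs _
  have hmmin : ∀ h : V → ℝ, h x = 0 → Steklov.bd G x h = 1 →
      Steklov.en G m ≤ Steklov.en G h := fun h h1 h2 => hmen.trans (hm₀min h h1 h2)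
  have hmb1 : Steklov.bd G x m = 1 := by rw [hmb, hm₀b]
  set μ : ℝ := Steklov.en G m / 2 with hμdef
  have hμnn : 0 ≤ μ := by rw [hμdef]; have := en_nonneg G m; linarith
  have hlb : ∀ h : V → ℝ, h x = 0 → 2 * μ * Steklov.bd G x h ≤ Steklov.en G h := by
    intro h hhx
    have := scale_lb x m hmmin h hhx
    calc 2 * μ * Steklov.bd G x h = Steklov.en G m * Steklov.bd G x h := by
          rw [hμdef]; ring
      _ ≤ Steklov.en G h := this
  have heqm : Steklov.en G m = 2 * μ * Steklov.bd G x m := by rw [hmb1, hμdef]; ring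
  have hEL := euler_lagrange x μ hlb m hmx heqm
  have hmnn : ∀ v, 0 ≤ m v := fun v => abs_nonneg _
  -- μ > 0
  have hμpos : 0 < μ := by
    rcases eq_or_lt_of_le hμnn with h0 | h0
    · exfalso
      have hen0 : Steklov.en G m = 0 := by rw [hμdef] at h0; linarith
      have hconst : ∀ v y : V, G.Adj v y → m v = m y := by
        intro v y hadj
        have h1 : ∀ v ∈ (Finset.univ : Finset V),
            0 ≤ ∑ y ∈ G.neighborFinset v, (m v - m y) ^ 2 :=
          fun v _ => Finset.sum_nonneg fun _ _ => sq_nonneg _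
        have h2 := (Finset.sum_eq_zero_iff_of_nonneg h1).mp hen0 v (Finset.mem_univ v)
        have h3 := (Finset.sum_eq_zero_iff_of_nonneg
          (fun _ _ => sq_nonneg _)).mp h2 y (by rwa [mem_neighborFinset])
        have := sq_eq_zero_iff.mp h3
        linarith
      have hall : ∀ v : V, m v = 0 := by
        intro v
        obtain ⟨p⟩ := hconn.preconnected x v
        have := eq_on_walk m hconst p
        rw [← this, hmx]
      have : Steklov.bd G x m = 0 := Finset.sum_eq_zero fun w _ => by rw [hall w]; ring
      rw [hmb1] at this; norm_num at this
    · exact h0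
  -- strict positivity off x
  have hpos : ∀ v, v ≠ x → 0 < m v := by
    intro v hvx
    rcases eq_or_lt_of_le (hmnn v) with h0 | h0
    · exfalso
      have hprop := flow_zero_propagation hconn hx m hmnn ?_ hvx h0.symm
      · have : Steklov.bd G x m = 0 := by
          apply Finset.sum_eq_zero
          intro w hw
          rw [hprop w (Finset.mem_erase.mp hw).1]; ring
        rw [hmb1] at this; norm_num at this
      · intro w hwx hw0
        rw [hEL w hwx]
        by_cases hwb : w ∈ Steklov.bdry G <;> simp [hwb, hw0]
    · exact h0
  -- monotonicity
  have hmono : ∀ y z : V, G.Adj y z → G.dist x z < G.dist x y → m z < m y := by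
    intro y z hadj hlt
    set S := branchF G y z with hSdef
    have hyS : y ∈ S := branchF_self
    have hzS : z ∉ S := branchF_not_z hG hadj
    have hxS : x ∉ S := branchF_not_x hG hadj hlt
    -- sum identity
    have hsum := sum_lap_subset G m S
    have hrhs : ∑ v ∈ S, ∑ u ∈ G.neighborFinset v \ S, (m v - m u) = m y - m z := by
      have hper : ∀ v ∈ S, ∑ u ∈ G.neighborFinset v \ S, (m v - m u)
          = if v = y then m y - m z else 0 := by
        intro v hv
        by_cases hvy : v = y
        · subst hvy
          have : G.neighborFinset v \ S = {z} := by
            ext u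
            simp only [Finset.mem_sdiff, mem_neighborFinset, Finset.mem_singleton]
            constructor
            · rintro ⟨hu1, hu2⟩
              by_contra hne
              exact hu2 (branchF_closed hG hadj hv hu1 (fun hc => hne hc.2))
            · rintro rfl
              exact ⟨hadj, hzS⟩
          rw [this, Finset.sum_singleton, if_pos rfl]
        · have : G.neighborFinset v \ S = ∅ := by
            ext u
            simp only [Finset.mem_sdiff, mem_neighborFinset, Finset.notMem_empty,
              iff_false, not_and, not_not]
            intro hu1
            by_contra hu2
            exact hu2 (branchF_closed hG hadj hv hu1 (fun hc => hvy hc.1))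
          rw [this, Finset.sum_empty, if_neg hvy]
      rw [Finset.sum_congr rfl hper, Finset.sum_ite_eq' S y (fun _ => m y - m z), if_pos hyS]
    have hlhs : ∑ v ∈ S, Steklov.lap G m v
        = μ * ∑ v ∈ S.filter (fun v => v ∈ Steklov.bdry G), m v := by
      rw [Finset.mul_sum, ← Finset.sum_filter_add_sum_filter_not S (fun v => v ∈ Steklov.bdry G)]
      have h1 : ∀ v ∈ S.filter (fun v => v ∈ Steklov.bdry G), Steklov.lap G m v = μ * m v := by
        intro v hv
        rw [Finset.mem_filter] at hv
        rw [hEL v (fun h => hxS (h ▸ hv.1)), if_pos hv.2]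
      have h2 : ∀ v ∈ S.filter (fun v => ¬v ∈ Steklov.bdry G), Steklov.lap G m v = 0 := by
        intro v hv
        rw [Finset.mem_filter] at hv
        rw [hEL v (fun h => hxS (h ▸ hv.1)), if_neg hv.2]
      rw [Finset.sum_congr rfl h1, Finset.sum_congr rfl h2, Finset.sum_const_zero, add_zero]
    -- a boundary vertex in S
    have hleaf : ∃ v ∈ S, G.degree v = 1 := by
      apply exists_leaf_in hG x S ⟨y, hyS⟩ hxS
      intro v hv u hadj2 hdlt
      apply branchF_closed hG hadj hv hadj2
      rintro ⟨rfl, rfl⟩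
      omega
    obtain ⟨v₀, hv₀S, hv₀d⟩ := hleaf
    have hv₀b : v₀ ∈ Steklov.bdry G := by
      rw [Steklov.bdry, Finset.mem_filter]; exact ⟨Finset.mem_univ _, hv₀d⟩
    have hv₀pos : 0 < m v₀ := hpos v₀ (fun h => hxS (h ▸ hv₀S))
    have hSBpos : 0 < ∑ v ∈ S.filter (fun v => v ∈ Steklov.bdry G), m v := by
      apply lt_of_lt_of_le hv₀pos
      apply Finset.single_le_sum (f := fun v => m v)
        (fun v hv => hmnn v) (Finset.mem_filter.mpr ⟨hv₀S, hv₀b⟩)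
    have : m y - m z = μ * ∑ v ∈ S.filter (fun v => v ∈ Steklov.bdry G), m v := by
      rw [← hlhs, hsum, hrhs]
    nlinarith
  -- assemble SigmaSet membership
  have hmne : m ≠ 0 := by
    intro h
    rw [h] at hmb1
    unfold Steklov.bd at hmb1
    simp at hmb1
  refine ⟨μ, hμpos, ⟨le_of_lt hμpos, m, ⟨hmne, ?_, ?_⟩, hmx, hmono⟩, hlb⟩
  · intro w hwb hwx
    rw [hEL w hwx, if_neg hwb]
  · intro w hwb hwx
    rw [hEL w hwx, if_pos hwb]


open SimpleGraph

variable {G : SimpleGraph V}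

lemma posPart_ineq (a b : ℝ) :
    (max a 0 - max b 0) ^ 2 ≤ (max a 0 - max b 0) * (a - b) := by
  have hpa : max a 0 * (max a 0 - a) = 0 := by
    rcases le_total a 0 with h | h
    · rw [max_eq_right h]; ring
    · rw [max_eq_left h]; ring
  have hpb : max b 0 * (max b 0 - b) = 0 := by
    rcases le_total b 0 with h | h
    · rw [max_eq_right h]; ring
    · rw [max_eq_left h]; ring
  nlinarith [le_max_right a 0, le_max_right b 0, le_max_left a 0, le_max_left b 0]

lemma second_leaf (hG : G.IsTree) (hcard : 3 ≤ Fintype.card V) (x : V) :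
    ∃ w, w ∈ Steklov.bdry G ∧ w ≠ x := by
  have h1 : 1 < Fintype.card V := by omega
  obtain ⟨v, hv⟩ := Fintype.exists_ne_of_one_lt_card h1 x
  have := exists_leaf_in hG x (Finset.univ.erase x) ⟨v, Finset.mem_erase.mpr ⟨hv, Finset.mem_univ _⟩⟩
    (fun h => (Finset.mem_erase.mp h).1 rfl) ?_
  · obtain ⟨w, hw1, hw2⟩ := this
    exact ⟨w, by rw [Steklov.bdry, Finset.mem_filter]; exact ⟨Finset.mem_univ _, hw2⟩,
      (Finset.mem_erase.mp hw1).1⟩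
  · intro v' hv' u hadj hlt
    refine Finset.mem_erase.mpr ⟨?_, Finset.mem_univ _⟩
    rintro rfl
    simp [SimpleGraph.dist_self] at hlt

lemma x₁_not_leaf (hG : G.IsTree) (hcard : 3 ≤ Fintype.card V) {x x₁ : V}
    (hdegx : G.degree x = 1) (hadj : G.Adj x x₁) : G.degree x₁ ≠ 1 := by
  intro hd1
  have hnx : G.neighborFinset x = {x₁} := nbrs_eq_singleton hdegx hadj
  have hnx₁ : G.neighborFinset x₁ = {x} := nbrs_eq_singleton hd1 hadj.symm
  -- find a third vertex
  have : ((Finset.univ.erase x).erase x₁).Nonempty := by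
    apply Finset.card_pos.mp
    have h1 := Finset.card_erase_of_mem (Finset.mem_univ x)
    have h2 : x₁ ∈ Finset.univ.erase x := Finset.mem_erase.mpr ⟨hadj.ne', Finset.mem_univ _⟩
    have h3 := Finset.card_erase_of_mem h2
    rw [h3, h1]
    simp only [Finset.card_univ]
    omega
  obtain ⟨w, hw⟩ := this
  have hwx₁ : w ≠ x₁ := (Finset.mem_erase.mp hw).1
  have hwx : w ≠ x := (Finset.mem_erase.mp (Finset.mem_erase.mp hw).2).1
  obtain ⟨q⟩ := hG.isConnected.preconnected x₁ w
  have hp : q.bypass.IsPath := q.bypass_isPath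
  generalize q.bypass = p at hp
  cases p with
  | nil => exact hwx₁ rfl
  | cons h₁ t =>
    rename_i a
    have ha : a = x := by
      have : a ∈ G.neighborFinset x₁ := by rwa [mem_neighborFinset]
      rwa [hnx₁, Finset.mem_singleton] at this
    cases t with
    | nil => exact hwx ha
    | cons h₂ r =>
      rename_i b
      have hb : b = x₁ := by
        have : b ∈ G.neighborFinset x := by rw [← ha]; rwa [mem_neighborFinset]
        rwa [hnx, Finset.mem_singleton] at this
      have hx₁r : x₁ ∈ r.support := hb ▸ r.start_mem_support
      have hnodup := hp.support_nodup
      simp only [SimpleGraph.Walk.support_cons, List.nodup_cons] at hnodup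
      exact hnodup.1 (List.mem_cons.mpr (Or.inr hx₁r))


end AuxSteklov

/-- With `σ₁` as in Lemma 3.6 (minimum of `σ(G_j, x₁)` over branches at the
other neighbors of the neighbor `x₁` of the boundary vertex `x`): if `f` is a `lam`-flow to
`x` with `0 ≤ lam < σ₁`, positive on `δG ∖ {x}`, and `f x < 0`, then `lam > σ(G,x)`. -/
theorem flow_negative_gt_sigma (G : SimpleGraph V) (hG : G.IsTree)
    (hcard : 3 ≤ Fintype.card V) (x : V) (hx : x ∈ bdry G) (x₁ : V) (hx₁ : G.Adj x x₁)
    (σ₁ : ℝ) (hσ₁ : σ₁ = sInf {r : ℝ | ∃ z, G.Adj x₁ z ∧ z ≠ x ∧ r = sigmaB G z x₁})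
    (lam : ℝ) (hlam0 : 0 ≤ lam) (hlam1 : lam < σ₁) (f : V → ℝ)
    (hf : IsFlow G lam x f) (hpos : ∀ z ∈ bdry G, z ≠ x → 0 < f z) (hneg : f x < 0) :
    sigma G x < lam := by
  have hconn := hG.isConnected
  have hdegx : G.degree x = 1 := (Finset.mem_filter.mp hx).2
  obtain ⟨w₀, hw₀b, hw₀x⟩ := second_leaf hG hcard x
  set g : V → ℝ := fun v => max (f v) 0 with hgdef
  have hgx : g x = 0 := max_eq_right (le_of_lt hneg)
  have hgf : ∀ w ∈ (Steklov.bdry G).erase x, g w = f w := by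
    intro w hw
    obtain ⟨hw1, hw2⟩ := Finset.mem_erase.mp hw
    exact max_eq_left (le_of_lt (hpos w hw2 hw1))
  have hbdgf : Steklov.bd G x g = Steklov.bd G x f := by
    unfold Steklov.bd
    exact Finset.sum_congr rfl (fun w hw => by rw [hgf w hw])
  have hbdf : 0 < Steklov.bd G x f := by
    apply Finset.sum_pos' (fun w _ => sq_nonneg _)
    refine ⟨w₀, Finset.mem_erase.mpr ⟨hw₀x, hw₀b⟩, ?_⟩
    have := hpos w₀ hw₀b hw₀x
    positivity
  have hbdg : 0 < Steklov.bd G x g := by rw [hbdgf]; exact hbdf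
  obtain ⟨μ, hμpos, hμmem, hlb⟩ := key_aux hG hdegx g hgx hbdg
  have htest : Steklov.en G g ≤ 2 * lam * Steklov.bd G x g := by
    have step1 : Steklov.en G g
        ≤ ∑ v, ∑ y ∈ G.neighborFinset v, (g v - g y) * (f v - f y) := by
      apply Finset.sum_le_sum; intro v _
      apply Finset.sum_le_sum; intro y _
      exact posPart_ineq (f v) (f y)
    have step2 : (∑ v, ∑ y ∈ G.neighborFinset v, (g v - g y) * (f v - f y))
        = 2 * ∑ v, g v * Steklov.lap G f v := ebil_eq G g f
    have step3 : ∑ v, g v * Steklov.lap G f v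
        = ∑ v ∈ (Steklov.bdry G).erase x, g v * Steklov.lap G f v := by
      symm
      apply Finset.sum_subset (Finset.subset_univ _)
      intro v _ hv
      rcases eq_or_ne v x with rfl | hvx
      · rw [hgx]; ring
      · have hvb : v ∉ Steklov.bdry G := fun hb => hv (Finset.mem_erase.mpr ⟨hvx, hb⟩)
        rw [hf.2.1 v hvb hvx]; ring
    have step4 : ∑ v ∈ (Steklov.bdry G).erase x, g v * Steklov.lap G f v
        = lam * Steklov.bd G x g := by
      unfold Steklov.bd
      rw [Finset.mul_sum]
      apply Finset.sum_congr rfl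
      intro w hw
      obtain ⟨hw1, hw2⟩ := Finset.mem_erase.mp hw
      rw [hf.2.2 w hw2 hw1, hgf w hw]
      ring
    calc Steklov.en G g ≤ _ := step1
      _ = 2 * ∑ v, g v * Steklov.lap G f v := step2
      _ = 2 * (lam * Steklov.bd G x g) := by rw [step3, step4]
      _ = 2 * lam * Steklov.bd G x g := by ring
  have hμlam : μ ≤ lam := by
    have h1 := hlb g hgx
    nlinarith
  have hμne : μ ≠ lam := by
    rintro rfl
    have heqg : Steklov.en G g = 2 * μ * Steklov.bd G x g :=
      le_antisymm htest (hlb g hgx)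
    have hELg := euler_lagrange x μ hlb g hgx heqg
    set u : V → ℝ := fun v => g v - f v with hudef
    have hunn : ∀ v, 0 ≤ u v := by
      intro v
      show 0 ≤ max (f v) 0 - f v
      have := le_max_left (f v) 0
      linarith
    have hu0 : ∀ w ∈ (Steklov.bdry G).erase x, u w = 0 := by
      intro w hw
      show g w - f w = 0
      rw [hgf w hw]; ring
    have hlapu : ∀ v, v ≠ x → u v = 0 → Steklov.lap G u v = 0 := by
      intro v hvx hv0
      have hveq : g v - f v = 0 := hv0
      have hsub : Steklov.lap G u v = Steklov.lap G g v - Steklov.lap G f v := lap_sub G g f v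
      by_cases hvb : v ∈ Steklov.bdry G
      · rw [hsub, hELg v hvx, if_pos hvb, hf.2.2 v hvb hvx]
        nlinarith [hveq]
      · rw [hsub, hELg v hvx, if_neg hvb, hf.2.1 v hvb hvx]; ring
    have hprop := flow_zero_propagation hconn hdegx u hunn hlapu hw₀x
      (hu0 w₀ (Finset.mem_erase.mpr ⟨hw₀x, hw₀b⟩))
    have hx₁x : x₁ ≠ x := hx₁.ne'
    have hx₁b : x₁ ∉ Steklov.bdry G := by
      intro hb
      exact x₁_not_leaf hG hcard hdegx hx₁ (Finset.mem_filter.mp hb).2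
    have h1 : Steklov.lap G u x₁ = 0 := by
      rw [lap_sub G g f x₁, hELg x₁ hx₁x, if_neg hx₁b, hf.2.1 x₁ hx₁b hx₁x]; ring
    have h2 : Steklov.lap G u x₁ = -(u x) := by
      have hux₁ : u x₁ = 0 := hprop x₁ hx₁x
      unfold Steklov.lap
      have e1 : ∀ y ∈ G.neighborFinset x₁, u x₁ - u y = -(u y) := by
        intro y _; rw [hux₁]; ring
      rw [Finset.sum_congr rfl e1, Finset.sum_neg_distrib]
      congr 1
      apply Finset.sum_eq_single_of_mem x (by rwa [SimpleGraph.mem_neighborFinset, SimpleGraph.adj_comm])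
      intro y _ hy
      exact hprop y hy
    have hux : u x = 0 := by rw [h1] at h2; linarith
    have : u x = -(f x) := by show g x - f x = _; rw [hgx]; ring
    rw [this] at hux
    linarith
  have hσle : Steklov.sigma G x ≤ μ := csInf_le ⟨0, fun r hr => hr.1⟩ hμmem
  exact lt_of_le_of_lt hσle (lt_of_le_of_ne hμlam hμne)
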